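/- Let B be a 2×2 complex matrix such that I_2 − (B·Bᴴ + Bᴴ·B) is positive semidefinite. Then there exists a 6×6 complex matrix B̃ such that B̃(i,j) = B(i,j) for all i, j ∈ Fin 2 (i.e., B is the top-left 2×2 corner of B̃, so B̃ is a dilation of B) and B̃·B̃ᴴ + B̃ᴴ·B̃ = I_6. -/

import Mathlib

open Matrix
open scoped ComplexOrder

lemma fin2_magic (C : Matrix (Fin 2) (Fin 2) ℂ) (h : C 1 1 = -C 0 0) :
    C * Cᴴ + Cᴴ * C = ((C * Cᴴ).trace) • (1 : Matrix (Fin 2) (Fin 2) ℂ) := by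
  ext i j
  fin_cases i <;> fin_cases j <;>
    simp [Matrix.mul_apply, Matrix.conjTranspose_apply, Fin.sum_univ_two, Matrix.trace_fin_two,
      Matrix.one_apply, h, star_neg, Matrix.smul_apply, smul_eq_mul] <;> ring

lemma fin2_CH (A : Matrix (Fin 2) (Fin 2) ℂ) :
    A * A = A.trace • A - A.det • (1 : Matrix (Fin 2) (Fin 2) ℂ) := by
  ext i j
  fin_cases i <;> fin_cases j <;>
    simp [Matrix.mul_apply, Fin.sum_univ_two, Matrix.trace_fin_two, Matrix.det_fin_two,
      Matrix.one_apply, Matrix.smul_apply, smul_eq_mul, Matrix.sub_apply] <;> ring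

lemma comm_aux (p q r s : ℂ) (W : Matrix (Fin 2) (Fin 2) ℂ) :
    (p • (1 : Matrix (Fin 2) (Fin 2) ℂ) + q • W) * (r • 1 + s • W)
      = (r • 1 + s • W) * (p • 1 + q • W) := by
  simp only [Matrix.mul_add, Matrix.add_mul, smul_mul_assoc, mul_smul_comm, smul_smul,
    Matrix.one_mul, Matrix.mul_one]
  module

lemma sqrt_calc (Δ : Matrix (Fin 2) (Fin 2) ℂ) (tt dd τ : ℝ)
    (htr : Δ.trace = (tt : ℂ)) (hdet : Δ.det = ((dd ^ 2 : ℝ) : ℂ))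
    (hτ2 : τ ^ 2 = tt / 2 + dd) (hτ0 : τ ≠ 0) :
    ((((2 * τ)⁻¹ : ℝ) : ℂ) • Δ + ((dd * (2 * τ)⁻¹ : ℝ) : ℂ) • 1)
      * ((((2 * τ)⁻¹ : ℝ) : ℂ) • Δ + ((dd * (2 * τ)⁻¹ : ℝ) : ℂ) • 1)
      = ((2⁻¹ : ℝ) : ℂ) • Δ := by
  have e1 : ((2 * τ)⁻¹ : ℝ) * (2 * τ)⁻¹ * tt + ((2 * τ)⁻¹ * (dd * (2 * τ)⁻¹) + dd * (2 * τ)⁻¹ * (2 * τ)⁻¹) = 2⁻¹ := by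
    field_simp
    nlinarith [hτ2]
  have e2 : (dd * (2 * τ)⁻¹ : ℝ) * (dd * (2 * τ)⁻¹) - (2 * τ)⁻¹ * (2 * τ)⁻¹ * dd ^ 2 = 0 := by
    field_simp
    ring
  simp only [Matrix.mul_add, Matrix.add_mul, smul_mul_assoc, mul_smul_comm, smul_smul,
    Matrix.one_mul, Matrix.mul_one]
  rw [fin2_CH Δ, htr, hdet]
  rw [smul_sub, smul_smul, smul_smul]
  match_scalars
  · have e1c := congrArg (Complex.ofReal) e1
    push_cast at e1c
    linear_combination e1c
  · have e2c := congrArg (Complex.ofReal) e2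
    push_cast at e2c
    linear_combination e2c

theorem dilation_for_M2 (B : Matrix (Fin 2) (Fin 2) ℂ)
    (hB : ((1 : Matrix (Fin 2) (Fin 2) ℂ) - (B * Bᴴ + Bᴴ * B)).PosSemidef) :
    ∃ Bt : Matrix (Fin 6) (Fin 6) ℂ,
      (∀ i j : Fin 2,
        Bt (Fin.castLE (by norm_num) i) (Fin.castLE (by norm_num) j) = B i j) ∧
      Bt * Btᴴ + Btᴴ * Bt = 1 := by
  classical
  set t : ℂ := B.trace with ht
  set u : ℂ := if t = 0 then 1 else (starRingEnd ℂ) t / (‖t‖ : ℂ) with hu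
  have habs : t ≠ 0 → (‖t‖ : ℂ) ≠ 0 := by
    intro h
    simpa using (norm_ne_zero_iff.mpr h)
  have huu : (starRingEnd ℂ) u * u = 1 := by
    by_cases h : t = 0
    · simp [hu, h]
    · rw [hu, if_neg h]
      rw [map_div₀, Complex.conj_conj, Complex.conj_ofReal]
      rw [div_mul_div_comm, Complex.mul_conj, ← Complex.ofReal_mul, Complex.normSq_eq_norm_sq, sq]
      exact div_self (by exact_mod_cast mul_ne_zero (norm_ne_zero_iff.mpr h) (norm_ne_zero_iff.mpr h))
  have huu' : u * (starRingEnd ℂ) u = 1 := by rw [mul_comm]; exact huu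
  have hut : u * t = (‖t‖ : ℂ) := by
    by_cases h : t = 0
    · simp [hu, h]
    · rw [hu, if_neg h, div_mul_eq_mul_div, mul_comm _ t, Complex.mul_conj,
        Complex.normSq_eq_norm_sq]
      rw [sq]
      push_cast
      rw [mul_div_assoc, div_self (habs h), mul_one]

  set β : ℝ := ‖t‖ / 2 with hβ
  set B' : Matrix (Fin 2) (Fin 2) ℂ := u • B with hB'
  have htrB' : B'.trace = ((2 * β : ℝ) : ℂ) := by
    rw [hB', Matrix.trace_smul, smul_eq_mul, ← ht, hut, hβ]
    push_cast
    ring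
  set C : Matrix (Fin 2) (Fin 2) ℂ := B' - (β : ℂ) • 1 with hC
  have hsum : B' 0 0 + B' 1 1 = ((2 * β : ℝ) : ℂ) := by
    rw [← Matrix.trace_fin_two]; exact htrB'
  have hC11 : C 1 1 = - C 0 0 := by
    rw [hC]
    simp only [Matrix.sub_apply, Matrix.smul_apply, Matrix.one_apply, if_pos rfl, smul_eq_mul]
    norm_num
    push_cast at hsum
    linear_combination hsum
  have hB'1 : B' = (β : ℂ) • 1 + C := by rw [hC]; abel
  have hB'H : B'ᴴ = (β : ℂ) • 1 + Cᴴ := by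
    rw [hB'1]
    simp [conjTranspose_add, conjTranspose_smul, Complex.conj_ofReal]
  set Δ : Matrix (Fin 2) (Fin 2) ℂ := 1 - (B * Bᴴ + Bᴴ * B) with hΔdef
  have hΔpsd : Δ.PosSemidef := hB
  have hBB'1 : B' * B'ᴴ = B * Bᴴ := by
    rw [hB', conjTranspose_smul, smul_mul_assoc, mul_smul_comm, smul_smul]
    rw [starRingEnd_apply] at huu'
    rw [huu', one_smul]
  have hBB'2 : B'ᴴ * B' = Bᴴ * B := by
    rw [hB', conjTranspose_smul, smul_mul_assoc, mul_smul_comm, smul_smul]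
    rw [starRingEnd_apply] at huu
    rw [huu, one_smul]
  have hΔ' : Δ = 1 - (B' * B'ᴴ + B'ᴴ * B') := by rw [hBB'1, hBB'2]
  have hH : Δ.IsHermitian := hΔpsd.1
  set μ := hH.eigenvalues with hμ
  have hμ0 : 0 ≤ μ 0 := hΔpsd.eigenvalues_nonneg 0
  have hμ1 : 0 ≤ μ 1 := hΔpsd.eigenvalues_nonneg 1
  set dd : ℝ := Real.sqrt (μ 0 * μ 1) with hddd
  have hdd0 : 0 ≤ dd := Real.sqrt_nonneg _
  have hdd2 : dd ^ 2 = μ 0 * μ 1 := Real.sq_sqrt (mul_nonneg hμ0 hμ1)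
  have hdet : Δ.det = ((dd ^ 2 : ℝ) : ℂ) := by
    rw [hH.det_eq_prod_eigenvalues, hdd2]
    simp [Fin.prod_univ_two, hμ]
  set tt : ℝ := μ 0 + μ 1 with htt
  have htt0 : 0 ≤ tt := add_nonneg hμ0 hμ1
  have htr : Δ.trace = ((tt : ℝ) : ℂ) := by
    rw [hH.trace_eq_sum_eigenvalues]
    simp [Fin.sum_univ_two, htt, hμ]
  set τ : ℝ := Real.sqrt (tt / 2 + dd) with hτd
  have hτnn : 0 ≤ τ := Real.sqrt_nonneg _
  have hτ2 : τ ^ 2 = tt / 2 + dd := Real.sq_sqrt (by linarith)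
  have hΔ0 : τ = 0 → Δ = 0 := by
    intro h0
    have h1 : tt / 2 + dd = 0 := by rw [← hτ2, h0]; ring
    have h2 : μ 0 = 0 ∧ μ 1 = 0 := by
      have h3 : tt = 0 := by nlinarith [hdd0, htt0]
      rw [htt] at h3
      constructor <;> linarith
    have h3 : (RCLike.ofReal ∘ μ : Fin 2 → ℂ) = fun _ => 0 := by
      funext i
      fin_cases i <;> simp [h2.1, h2.2]
    rw [hH.spectral_theorem, h3]
    simp
  set xa : ℝ := (2 * τ)⁻¹ with hxa
  set xb : ℝ := dd * (2 * τ)⁻¹ with hxb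
  set X : Matrix (Fin 2) (Fin 2) ℂ := (xa : ℂ) • Δ + (xb : ℂ) • 1 with hX
  have hXh : Xᴴ = X := by
    rw [hX]
    simp [conjTranspose_add, conjTranspose_smul, Complex.conj_ofReal, hH.eq]
  have hX2 : X * X = ((2⁻¹ : ℝ) : ℂ) • Δ := by
    by_cases hτ0 : τ = 0
    · have hz := hΔ0 hτ0
      have hxa0 : xa = 0 := by rw [hxa, hτ0]; simp
      have hxb0 : xb = 0 := by rw [hxb, hτ0]; simp
      rw [hX, hz, hxa0, hxb0]
      simp
    · rw [hX, hxa, hxb]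
      exact sqrt_calc Δ tt dd τ htr hdet hτ2 hτ0
  clear_value B' C Δ X
  -- commutation
  set W : Matrix (Fin 2) (Fin 2) ℂ := C + Cᴴ with hW
  have hV : B' + B'ᴴ = ((2 * β : ℝ) : ℂ) • 1 + (1 : ℂ) • W := by
    rw [hB'H, hB'1, hW]
    module
  set γ : ℂ := (C * Cᴴ).trace with hγ
  have hm : C * Cᴴ + Cᴴ * C = γ • (1 : Matrix (Fin 2) (Fin 2) ℂ) := by
    rw [hγ]; exact fin2_magic C hC11
  have hrep : C * Cᴴ = γ • (1 : Matrix (Fin 2) (Fin 2) ℂ) - Cᴴ * C := eq_sub_of_add_eq hm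
  have hS' : B' * B'ᴴ + B'ᴴ * B' = ((β : ℂ) ^ 2 * 2 + γ) • 1 + ((2 * β : ℝ) : ℂ) • W := by
    rw [hB'H, hB'1]
    simp only [Matrix.mul_add, Matrix.add_mul, smul_mul_assoc, mul_smul_comm, smul_smul,
      Matrix.one_mul, Matrix.mul_one]
    rw [hrep, hW]
    module
  have hcommS : (B' + B'ᴴ) * (B' * B'ᴴ + B'ᴴ * B') = (B' * B'ᴴ + B'ᴴ * B') * (B' + B'ᴴ) := by
    rw [hV, hS']
    exact comm_aux _ _ _ _ W
  have hcommD : (B' + B'ᴴ) * Δ = Δ * (B' + B'ᴴ) := by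
    rw [hΔ']
    simp only [Matrix.mul_sub, Matrix.sub_mul, Matrix.mul_one, Matrix.one_mul]
    rw [hcommS]
  have hcommX : (B' + B'ᴴ) * X = X * (B' + B'ᴴ) := by
    have hL : (B' + B'ᴴ) * X = (xa : ℂ) • ((B' + B'ᴴ) * Δ) + (xb : ℂ) • (B' + B'ᴴ) := by
      rw [hX, Matrix.mul_add, mul_smul_comm, mul_smul_comm, Matrix.mul_one]
    have hR : X * (B' + B'ᴴ) = (xa : ℂ) • (Δ * (B' + B'ᴴ)) + (xb : ℂ) • (B' + B'ᴴ) := by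
      rw [hX, Matrix.add_mul, smul_mul_assoc, smul_mul_assoc, Matrix.one_mul]
    rw [hL, hR, hcommD]
  -- block identities
  have h11 : B' * B'ᴴ + X * X + (B'ᴴ * B' + X * X) = 1 := by
    rw [hX2, hΔ']
    match_scalars <;> (push_cast; norm_num)
  have hcX := hcommX
  simp only [Matrix.add_mul, Matrix.mul_add] at hcX
  have h12 : B' * X + X * (-B'ᴴ) + (B'ᴴ * X + X * (-B')) = 0 := by
    calc B' * X + X * (-B'ᴴ) + (B'ᴴ * X + X * (-B'))
        = (B' * X + B'ᴴ * X) - (X * B' + X * B'ᴴ) := by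
          simp only [Matrix.mul_neg]; abel
      _ = 0 := by rw [hcX]; exact sub_self _
  have h21 : X * B'ᴴ + (-B') * X + (X * B' + (-B'ᴴ) * X) = 0 := by
    calc X * B'ᴴ + (-B') * X + (X * B' + (-B'ᴴ) * X)
        = (X * B' + X * B'ᴴ) - (B' * X + B'ᴴ * X) := by
          simp only [Matrix.neg_mul]; abel
      _ = 0 := by rw [← hcX]; exact sub_self _
  have h22 : X * X + (-B') * (-B'ᴴ) + (X * X + (-B'ᴴ) * (-B')) = 1 := by
    simp only [Matrix.neg_mul, Matrix.mul_neg, neg_neg]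
    rw [hX2, hΔ']
    match_scalars <;> (push_cast; norm_num)
  -- assemble 4x4
  set M4 := Matrix.fromBlocks B' X X (-B') with hM4d
  have hM4H : M4ᴴ = Matrix.fromBlocks B'ᴴ X X (-B'ᴴ) := by
    rw [hM4d, Matrix.fromBlocks_conjTranspose, hXh, Matrix.conjTranspose_neg]
  have hM4 : M4 * M4ᴴ + M4ᴴ * M4 = 1 := by
    rw [hM4H, hM4d, Matrix.fromBlocks_multiply, Matrix.fromBlocks_multiply,
      Matrix.fromBlocks_add, h11, h12, h21, h22]
    exact Matrix.fromBlocks_one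
  -- K block
  set K : Matrix (Fin 2) (Fin 2) ℂ := Matrix.of ![![0, 1], ![0, 0]] with hKd
  have hK : K * Kᴴ + Kᴴ * K = 1 := by
    ext i j
    fin_cases i <;> fin_cases j <;>
      simp [hKd, Matrix.mul_apply, Fin.sum_univ_two, Matrix.conjTranspose_apply,
        Matrix.one_apply, Matrix.vecMul, dotProduct, Matrix.vecHead, Matrix.vecTail]
  -- assemble 6x6
  set M6 := Matrix.fromBlocks M4 0 0 K with hM6d
  have hM6 : M6 * M6ᴴ + M6ᴴ * M6 = 1 := by
    rw [hM6d, Matrix.fromBlocks_conjTranspose]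
    simp only [Matrix.conjTranspose_zero]
    rw [Matrix.fromBlocks_multiply, Matrix.fromBlocks_multiply, Matrix.fromBlocks_add]
    simp only [Matrix.mul_zero, Matrix.zero_mul, add_zero, zero_add]
    rw [hM4, hK]
    exact Matrix.fromBlocks_one
  set e : ((Fin 2 ⊕ Fin 2) ⊕ Fin 2) ≃ Fin 6 :=
    (Equiv.sumCongr finSumFinEquiv (Equiv.refl (Fin 2))).trans finSumFinEquiv with he
  set N := M6.submatrix e.symm e.symm with hN
  have hei : ∀ (h : (2 : ℕ) ≤ 6) (i : Fin 2),
      e.symm (Fin.castLE h i) = Sum.inl (Sum.inl i) := by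
    intro h i
    rw [Equiv.symm_apply_eq]
    rw [he]
    simp only [Equiv.trans_apply, Equiv.sumCongr_apply, Sum.map_inl]
    ext
    simp [finSumFinEquiv]
  refine ⟨(starRingEnd ℂ) u • N, ?_, ?_⟩
  · intro i j
    rw [Matrix.smul_apply, hN, Matrix.submatrix_apply, hei _ i, hei _ j]
    rw [hM6d, Matrix.fromBlocks_apply₁₁, hM4d, Matrix.fromBlocks_apply₁₁]
    rw [hB', Matrix.smul_apply, smul_eq_mul, smul_eq_mul, ← mul_assoc, huu, one_mul]
  · have hconj : ((starRingEnd ℂ) u • N)ᴴ = u • Nᴴ := by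
      rw [Matrix.conjTranspose_smul]
      congr 1
      exact Complex.conj_conj u
    rw [hconj]
    rw [smul_mul_assoc, mul_smul_comm, smul_smul, smul_mul_assoc, mul_smul_comm, smul_smul]
    rw [huu, huu', one_smul, one_smul]
    rw [hN, Matrix.conjTranspose_submatrix]
    rw [Matrix.submatrix_mul_equiv, Matrix.submatrix_mul_equiv]
    have hsub : (M6 * M6ᴴ).submatrix ⇑e.symm ⇑e.symm + (M6ᴴ * M6).submatrix ⇑e.symm ⇑e.symm
        = ((M6 * M6ᴴ) + (M6ᴴ * M6)).submatrix ⇑e.symm ⇑e.symm := rfl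
    rw [hsub, hM6, Matrix.submatrix_one_equiv]
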